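/- Under the same hypotheses (hyperedge sizes between k' and k, maximum degree Δ, t ≥ k, q ≥ (etΔ)^{1/(k'−1)}), for every vertex v and colour c, the probability under the uniform distribution over proper colourings that v receives colour c is at least (1/q)(1 − 1/t). -/

import Mathlib

open Finset in
private def goodCol {V : Type*} [Fintype V] [DecidableEq V] (q : ℕ) (S : Finset (Finset V)) : Finset (V → Fin q) :=
  Finset.univ.filter fun σ => ∀ e ∈ S, ¬ ∃ c' : Fin q, ∀ u ∈ e, σ u = c'

section Helpers
open Finset
variable {V : Type*} [Fintype V] [DecidableEq V]

lemma card_filter_and_mul (q : ℕ) (f : Finset V) (P Q : (V → Fin q) → Prop)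
    [DecidablePred P] [DecidablePred Q]
    (hP : ∀ σ ρ : V → Fin q, (∀ u ∈ f, σ u = ρ u) → (P σ ↔ P ρ))
    (hQ : ∀ σ ρ : V → Fin q, (∀ u ∉ f, σ u = ρ u) → (Q σ ↔ Q ρ)) :
    (univ.filter fun σ => P σ ∧ Q σ).card * (univ : Finset (V → Fin q)).card
      = (univ.filter P).card * (univ.filter Q).card := by
  rw [← Finset.card_product, ← Finset.card_product]
  apply Finset.card_bij'
    (i := fun x _ => (f.piecewise x.1 x.2, f.piecewise x.2 x.1))
    (j := fun y _ => (f.piecewise y.1 y.2, f.piecewise y.2 y.1))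
  · rintro ⟨a, b⟩ hx
    simp only [Finset.mem_product, Finset.mem_filter, Finset.mem_univ, true_and] at hx ⊢
    obtain ⟨hPa, hQa⟩ := hx.1
    constructor
    · exact (hP a _ (fun u hu => (f.piecewise_eq_of_mem _ _ hu).symm)).mp hPa
    · exact (hQ a _ (fun u hu => (f.piecewise_eq_of_notMem _ _ hu).symm)).mp hQa
  · rintro ⟨a, b⟩ -
    simp only [Prod.mk.injEq]
    constructor <;> funext u <;> by_cases hu : u ∈ f <;>
      simp [Finset.piecewise, hu]
  · rintro ⟨a, b⟩ -
    simp only [Prod.mk.injEq]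
    constructor <;> funext u <;> by_cases hu : u ∈ f <;>
      simp [Finset.piecewise, hu]
  · rintro ⟨a, b⟩ hy
    simp only [Finset.mem_product, Finset.mem_filter, Finset.mem_univ, true_and,
      and_true] at hy ⊢
    obtain ⟨hPa, hQb⟩ := hy
    constructor
    · exact (hP a _ (fun u hu => (f.piecewise_eq_of_mem _ _ hu).symm)).mp hPa
    · exact (hQ b _ (fun u hu => (f.piecewise_eq_of_notMem _ _ hu).symm)).mp hQb

lemma card_const_on (q : ℕ) (f : Finset V) (c : Fin q) :
    (univ.filter fun σ : V → Fin q => ∀ u ∈ f, σ u = c).card * q ^ f.card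
      = (univ : Finset (V → Fin q)).card := by
  have h1 : (univ.filter fun σ : V → Fin q => ∀ u ∈ f, σ u = c)
      = Fintype.piFinset (fun u => if u ∈ f then {c} else (univ : Finset (Fin q))) := by
    ext σ
    simp only [mem_filter, mem_univ, true_and, Fintype.mem_piFinset]
    constructor
    · intro h u
      by_cases hu : u ∈ f <;> simp [hu, h]
    · intro h u hu
      have := h u
      simpa [hu] using this
  rw [h1, Fintype.card_piFinset, Finset.card_univ, Fintype.card_fun, Fintype.card_fin]
  rw [← Finset.prod_sdiff (Finset.subset_univ f)]
  have h2 : ∀ u ∈ univ \ f, (if u ∈ f then ({c} : Finset (Fin q)) else univ).card = q := by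
    intro u hu
    simp only [mem_sdiff] at hu
    simp [hu.2]
  have h3 : ∀ u ∈ f, (if u ∈ f then ({c} : Finset (Fin q)) else univ).card = 1 := by
    intro u hu; simp [hu]
  rw [Finset.prod_congr rfl h2, Finset.prod_congr rfl h3]
  simp only [Finset.prod_const, one_pow, mul_one]
  rw [← pow_add, Finset.card_sdiff_add_card_eq_card (Finset.subset_univ f), Finset.card_univ]

lemma count_const_good (q : ℕ) (hq : 0 < q) (S : Finset (Finset V)) (f : Finset V)
    (hdisj : ∀ g ∈ S, Disjoint f g) (c : Fin q) :
    ((goodCol q S).filter fun σ => ∀ u ∈ f, σ u = c).card * q ^ f.card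
      = (goodCol q S).card := by
  have hU : 0 < (univ : Finset (V → Fin q)).card := by
    rw [Finset.card_univ, Fintype.card_fun, Fintype.card_fin]
    exact pow_pos hq _
  apply Nat.eq_of_mul_eq_mul_left hU
  have key := card_filter_and_mul q f
    (fun σ => ∀ u ∈ f, σ u = c)
    (fun σ => ∀ e ∈ S, ¬ ∃ c' : Fin q, ∀ u ∈ e, σ u = c')
    (by
      intro σ ρ h
      constructor <;> intro hh u hu
      · rw [← h u hu]; exact hh u hu
      · rw [h u hu]; exact hh u hu)
    (by
      intro σ ρ h
      have same : ∀ e ∈ S, ∀ u ∈ e, σ u = ρ u := by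
        intro e he u hu
        exact h u fun huf => (Finset.disjoint_left.mp (hdisj e he) huf) hu
      constructor <;> intro hh e he hex
      · exact hh e he (by
          obtain ⟨c', hc'⟩ := hex
          exact ⟨c', fun u hu => (same e he u hu).trans (hc' u hu)⟩)
      · exact hh e he (by
          obtain ⟨c', hc'⟩ := hex
          exact ⟨c', fun u hu => (same e he u hu).symm.trans (hc' u hu)⟩))
  beta_reduce at key
  have hg : ((goodCol q S).filter fun σ => ∀ u ∈ f, σ u = c)
      = univ.filter fun σ : V → Fin q =>
          (∀ u ∈ f, σ u = c) ∧ ∀ e ∈ S, ¬ ∃ c' : Fin q, ∀ u ∈ e, σ u = c' := by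
    rw [goodCol, Finset.filter_filter]
    exact Finset.filter_congr (by intro σ _; tauto)
  have hcc := card_const_on q f c
  have hN : (goodCol q S).card
      = (univ.filter fun σ : V → Fin q => ∀ e ∈ S, ¬ ∃ c' : Fin q, ∀ u ∈ e, σ u = c').card := rfl
  rw [hg, hN]
  set a := (univ.filter fun σ : V → Fin q =>
      (∀ u ∈ f, σ u = c) ∧ ∀ e ∈ S, ¬ ∃ c' : Fin q, ∀ u ∈ e, σ u = c').card with ha
  set b := (univ.filter fun σ : V → Fin q => ∀ u ∈ f, σ u = c).card with hb
  set n := (univ.filter fun σ : V → Fin q => ∀ e ∈ S, ¬ ∃ c' : Fin q, ∀ u ∈ e, σ u = c').card with hn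
  set u := (univ : Finset (V → Fin q)).card with hu
  calc u * (a * q ^ f.card) = (a * u) * q ^ f.card := by ring
    _ = (b * n) * q ^ f.card := by rw [key]
    _ = (b * q ^ f.card) * n := by ring
    _ = u * n := by rw [hcc]

lemma count_mono_good (q : ℕ) (hq : 0 < q) (S : Finset (Finset V)) (f : Finset V)
    (hdisj : ∀ g ∈ S, Disjoint f g) :
    ((goodCol q S).filter fun σ => ∃ c' : Fin q, ∀ u ∈ f, σ u = c').card * q ^ f.card
      ≤ q * (goodCol q S).card := by
  have hsub : ((goodCol q S).filter fun σ => ∃ c' : Fin q, ∀ u ∈ f, σ u = c')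
      ⊆ univ.biUnion fun c' : Fin q => (goodCol q S).filter fun σ => ∀ u ∈ f, σ u = c' := by
    intro σ hσ
    simp only [mem_filter, mem_biUnion, mem_univ, true_and] at hσ ⊢
    obtain ⟨h1, c', h2⟩ := hσ
    exact ⟨c', h1, h2⟩
  calc ((goodCol q S).filter fun σ => ∃ c' : Fin q, ∀ u ∈ f, σ u = c').card * q ^ f.card
      ≤ (∑ c' : Fin q, ((goodCol q S).filter fun σ => ∀ u ∈ f, σ u = c').card) * q ^ f.card :=
        Nat.mul_le_mul_right _ ((Finset.card_le_card hsub).trans Finset.card_biUnion_le)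
    _ = ∑ c' : Fin q, ((goodCol q S).filter fun σ => ∀ u ∈ f, σ u = c').card * q ^ f.card := by
        rw [Finset.sum_mul]
    _ = ∑ _c' : Fin q, (goodCol q S).card :=
        Finset.sum_congr rfl fun c' _ => count_const_good q hq S f hdisj c'
    _ = q * (goodCol q S).card := by simp [mul_comm]

lemma goodCol_anti (q : ℕ) {S T : Finset (Finset V)} (h : S ⊆ T) :
    goodCol q T ⊆ goodCol q S := by
  intro σ hσ
  simp only [goodCol, mem_filter, mem_univ, true_and] at hσ ⊢
  exact fun e he => hσ e (h he)

lemma goodCol_insert (q : ℕ) (S : Finset (Finset V)) (f : Finset V) :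
    goodCol q (insert f S)
      = (goodCol q S).filter fun σ => ¬ ∃ c' : Fin q, ∀ u ∈ f, σ u = c' := by
  ext σ
  simp only [goodCol, mem_filter, mem_univ, true_and, Finset.mem_insert]
  constructor
  · intro h
    exact ⟨fun e he => h e (Or.inr he), h f (Or.inl rfl)⟩
  · rintro ⟨h1, h2⟩ e (rfl | he)
    · exact h2
    · exact h1 e he

lemma exp_mul_pow_ge (x : ℝ) (hx0 : 0 < x) (hx1 : x < 1) (m : ℕ)
    (hm : (m : ℝ) * x ≤ 1 - x) : 1 ≤ Real.exp 1 * (1 - x) ^ m := by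
  have h1x : (0:ℝ) < 1 - x := by linarith
  have hy : 0 ≤ x / (1 - x) := by positivity
  have h1 : 1 / (1 - x) ≤ Real.exp (x / (1 - x)) := by
    have := Real.add_one_le_exp (x / (1 - x))
    have heq : x / (1 - x) + 1 = 1 / (1 - x) := by field_simp; ring
    linarith [heq ▸ this]
  have h2 : Real.exp (-(x / (1 - x))) ≤ 1 - x := by
    rw [Real.exp_neg]
    calc (Real.exp (x / (1 - x)))⁻¹ ≤ (1 / (1-x))⁻¹ := by
          apply inv_anti₀ (by positivity) h1
      _ = 1 - x := by field_simp
  have h3 : Real.exp (-((m:ℝ) * (x / (1 - x)))) ≤ (1 - x) ^ m := by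
    have := pow_le_pow_left₀ (Real.exp_nonneg _) h2 m
    calc Real.exp (-((m:ℝ) * (x / (1 - x)))) = Real.exp (-(x / (1-x))) ^ m := by
          rw [← Real.exp_nat_mul]; ring_nf
      _ ≤ (1 - x) ^ m := this
  have h4 : Real.exp (-1) ≤ Real.exp (-((m:ℝ) * (x / (1 - x)))) := by
    apply Real.exp_le_exp.mpr
    have : (m:ℝ) * (x / (1 - x)) ≤ 1 := by
      rw [mul_div_assoc', div_le_one h1x]
      linarith
    linarith
  have h5 : Real.exp (-1) ≤ (1 - x) ^ m := le_trans h4 h3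
  calc (1:ℝ) = Real.exp 1 * Real.exp (-1) := by
        rw [← Real.exp_add]; simp
    _ ≤ Real.exp 1 * (1 - x) ^ m := by
        apply mul_le_mul_of_nonneg_left h5 (Real.exp_nonneg 1)

lemma neighbor_card {V : Type*} [DecidableEq V] (𝓔 : Finset (Finset V)) (Δ : ℕ)
    (hdeg : ∀ u : V, (𝓔.filter fun e => u ∈ e).card ≤ Δ) (f : Finset V) :
    (𝓔.filter fun g => ¬ Disjoint f g).card ≤ f.card * Δ := by
  have hsub : (𝓔.filter fun g => ¬ Disjoint f g)
      ⊆ f.biUnion fun u => 𝓔.filter fun e => u ∈ e := by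
    intro g hg
    simp only [mem_filter, mem_biUnion] at hg ⊢
    obtain ⟨hg1, hg2⟩ := hg
    obtain ⟨u, hu1, hu2⟩ := Finset.not_disjoint_iff.mp hg2
    exact ⟨u, hu1, hg1, hu2⟩
  calc (𝓔.filter fun g => ¬ Disjoint f g).card
      ≤ ∑ u ∈ f, (𝓔.filter fun e => u ∈ e).card :=
        (Finset.card_le_card hsub).trans Finset.card_biUnion_le
    _ ≤ ∑ _u ∈ f, Δ := Finset.sum_le_sum fun u _ => hdeg u
    _ = f.card * Δ := by simp [mul_comm]

lemma lll_arith (B B' NS NS' Nf q P tD e1 : ℝ)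
    (hq0 : 0 < q) (he : 0 < e1) (htD : 2 ≤ tD)
    (hB0 : 0 ≤ B) (hNS0 : 0 ≤ NS)
    (hsplit : B + Nf = NS)
    (hBB' : B ≤ B')
    (hB'q : B' * P ≤ q * NS')
    (hP : q * (e1 * tD) ≤ P)
    (hNS'e : NS' ≤ e1 * NS) :
    (1 - 1 / tD) * NS ≤ Nf := by
  have htD0 : (0:ℝ) < tD := by linarith
  have hP0 : (0:ℝ) < P := lt_of_lt_of_le (by positivity) hP
  have h1 : B * (q * (e1 * tD)) ≤ B * P := mul_le_mul_of_nonneg_left hP hB0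
  have h2 : B * P ≤ B' * P := mul_le_mul_of_nonneg_right hBB' (le_of_lt hP0)
  have h3 : q * NS' ≤ q * (e1 * NS) := mul_le_mul_of_nonneg_left hNS'e (le_of_lt hq0)
  have h4 : B * (q * (e1 * tD)) ≤ q * (e1 * NS) := by linarith
  have h5 : (q * e1) * (B * tD) ≤ (q * e1) * NS := by nlinarith
  have h6 : B * tD ≤ NS := le_of_mul_le_mul_left h5 (by positivity)
  have h7 : B ≤ NS / tD := by
    rw [le_div_iff₀ htD0]; linarith
  have h8 : (1 - 1 / tD) * NS = NS - NS / tD := by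
    rw [sub_mul, one_mul, one_div, inv_mul_eq_div]
  nlinarith [h7, h8, hsplit]

lemma lll_main (𝓔 : Finset (Finset V)) (q Δ k : ℕ) (t : ℝ)
    (hΔ : 1 ≤ Δ) (hq0 : 0 < q)
    (hne : ∀ e ∈ 𝓔, e.Nonempty) (hk : ∀ e ∈ 𝓔, e.card ≤ k)
    (hdeg : ∀ u : V, (𝓔.filter fun e => u ∈ e).card ≤ Δ)
    (ht : (k : ℝ) ≤ t) (ht2 : 2 ≤ t)
    (hqe : ∀ e ∈ 𝓔, Real.exp 1 * t * (Δ : ℝ) ≤ (q : ℝ) ^ (e.card - 1)) :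
    ∀ S : Finset (Finset V), S ⊆ 𝓔 → ∀ f ∈ 𝓔, f ∉ S →
      (1 - 1 / (t * Δ)) * ((goodCol q S).card : ℝ)
        ≤ ((goodCol q (insert f S)).card : ℝ) := by
  have hΔR : (1:ℝ) ≤ (Δ:ℝ) := by exact_mod_cast hΔ
  have htΔ : (2:ℝ) ≤ t * Δ := by nlinarith
  have hx0 : (0:ℝ) < 1 / (t * Δ) := by positivity
  have hx1 : 1 / (t * Δ) < 1 := by
    rw [div_lt_one (by linarith)]; linarith
  intro S
  induction S using Finset.strongInduction with
  | _ S IH =>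
    intro hS𝓔 f hf𝓔 hfS
    set x : ℝ := 1 / (t * Δ) with hxdef
    -- split S into neighbours and non-neighbours of f
    set S' : Finset (Finset V) := S.filter fun g => Disjoint f g with hS'
    set Γ : Finset (Finset V) := S.filter fun g => ¬ Disjoint f g with hΓ
    have hunion : S' ∪ Γ = S := Finset.filter_union_filter_not_eq _ S
    -- Γ is small
    have hΓcard : (Γ.card : ℝ) ≤ t * Δ - 1 := by
      have hfree : f ∈ 𝓔.filter fun g => ¬ Disjoint f g := by
        simp only [mem_filter]
        refine ⟨hf𝓔, ?_⟩
        obtain ⟨u, hu⟩ := hne f hf𝓔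
        exact Finset.not_disjoint_iff.mpr ⟨u, hu, hu⟩
      have hsub : insert f Γ ⊆ 𝓔.filter fun g => ¬ Disjoint f g := by
        intro g hg
        rcases Finset.mem_insert.mp hg with rfl | hg
        · exact hfree
        · simp only [hΓ, mem_filter] at hg
          simp only [mem_filter]
          exact ⟨hS𝓔 hg.1, hg.2⟩
      have hfΓ : f ∉ Γ := fun h => hfS (Finset.filter_subset _ _ h)
      have h1 : Γ.card + 1 ≤ f.card * Δ := by
        have := Finset.card_le_card hsub
        rw [Finset.card_insert_of_notMem hfΓ] at this
        exact this.trans (neighbor_card 𝓔 Δ hdeg f)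
      have h2 : f.card ≤ k := hk f hf𝓔
      have : (Γ.card : ℝ) + 1 ≤ (k : ℝ) * Δ := by
        have : Γ.card + 1 ≤ k * Δ := h1.trans (Nat.mul_le_mul_right _ h2)
        exact_mod_cast this
      nlinarith
    -- the chain bound : (1-x)^|Γ| * N(S') ≤ N(S)
    have chain : ∀ T ⊆ Γ, (1 - x) ^ T.card * ((goodCol q S').card : ℝ)
        ≤ ((goodCol q (S' ∪ T)).card : ℝ) := by
      intro T
      induction T using Finset.induction_on with
      | empty => intro _; simp
      | @insert g T hgT ihT =>
        intro hsub
        have hgΓ : g ∈ Γ := hsub (Finset.mem_insert_self g T)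
        have hTΓ : T ⊆ Γ := fun y hy => hsub (Finset.mem_insert_of_mem hy)
        have hgS : g ∈ S := Finset.filter_subset _ _ hgΓ
        have hgS' : g ∉ S' := by
          simp only [hS', mem_filter]
          simp only [hΓ, mem_filter] at hgΓ
          tauto
        have hgT' : g ∉ S' ∪ T := by
          simp only [Finset.mem_union]
          tauto
        have hssub : S' ∪ T ⊂ S := by
          refine Finset.ssubset_iff_of_subset ?_ |>.mpr ⟨g, hgS, hgT'⟩
          exact Finset.union_subset (Finset.filter_subset _ _)
            (hTΓ.trans (Finset.filter_subset _ _))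
        have hsub𝓔 : S' ∪ T ⊆ 𝓔 := (hssub.subset).trans hS𝓔
        have hg𝓔 : g ∈ 𝓔 := hS𝓔 hgS
        have step := IH (S' ∪ T) hssub hsub𝓔 g hg𝓔 hgT'
        have hx : (0:ℝ) ≤ 1 - x := by linarith
        calc (1 - x) ^ (insert g T).card * ((goodCol q S').card : ℝ)
            = (1 - x) * ((1 - x) ^ T.card * ((goodCol q S').card : ℝ)) := by
              rw [Finset.card_insert_of_notMem hgT]; ring
          _ ≤ (1 - x) * ((goodCol q (S' ∪ T)).card : ℝ) :=
              mul_le_mul_of_nonneg_left (ihT hTΓ) hx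
          _ ≤ ((goodCol q (insert g (S' ∪ T))).card : ℝ) := step
          _ = ((goodCol q (S' ∪ insert g T)).card : ℝ) := by
              rw [Finset.union_insert]
    -- instantiate the chain at T = Γ
    have hchain : (1 - x) ^ Γ.card * ((goodCol q S').card : ℝ)
        ≤ ((goodCol q S).card : ℝ) := by
      have := chain Γ (Finset.Subset.refl Γ)
      rwa [hunion] at this
    -- counting facts
    have hdisjS' : ∀ g ∈ S', Disjoint f g := by
      intro g hg
      simp only [hS', mem_filter] at hg
      exact hg.2
    have hsplit : ((goodCol q S).filter fun σ => ∃ c' : Fin q, ∀ u ∈ f, σ u = c').card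
        + (goodCol q (insert f S)).card = (goodCol q S).card := by
      rw [goodCol_insert]
      exact Finset.card_filter_add_card_filter_not _
    have hBB' : ((goodCol q S).filter fun σ => ∃ c' : Fin q, ∀ u ∈ f, σ u = c').card
        ≤ ((goodCol q S').filter fun σ => ∃ c' : Fin q, ∀ u ∈ f, σ u = c').card :=
      Finset.card_le_card (Finset.filter_subset_filter _
        (goodCol_anti q (Finset.filter_subset _ S)))
    have hB'q := count_mono_good q hq0 S' f hdisjS'
    have hq1R : (1:ℝ) ≤ (q:ℝ) := by exact_mod_cast hq0
    have hqR0 : (0:ℝ) < (q:ℝ) := by exact_mod_cast hq0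
    have hfpos : 0 < f.card := (hne f hf𝓔).card_pos
    have hqpow : (q:ℝ) ^ f.card = (q:ℝ) ^ (f.card - 1) * q := by
      conv_lhs => rw [show f.card = (f.card - 1) + 1 from (Nat.succ_pred_eq_of_pos hfpos).symm]
      rw [pow_succ]
    have hqf := hqe f hf𝓔
    have hexp : 1 ≤ Real.exp 1 * (1 - x) ^ Γ.card := by
      apply exp_mul_pow_ge x hx0 hx1
      have htΔ0 : (0:ℝ) < t * Δ := by linarith
      calc (Γ.card : ℝ) * x ≤ (t * Δ - 1) * x :=
            mul_le_mul_of_nonneg_right hΓcard (le_of_lt hx0)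
        _ = 1 - x := by rw [hxdef]; field_simp
    have hsplitR : (((goodCol q S).filter fun σ => ∃ c' : Fin q, ∀ u ∈ f, σ u = c').card : ℝ)
        + ((goodCol q (insert f S)).card : ℝ) = ((goodCol q S).card : ℝ) := by
      exact_mod_cast hsplit
    have hBB'R : (((goodCol q S).filter fun σ => ∃ c' : Fin q, ∀ u ∈ f, σ u = c').card : ℝ)
        ≤ (((goodCol q S').filter fun σ => ∃ c' : Fin q, ∀ u ∈ f, σ u = c').card : ℝ) := by
      exact_mod_cast hBB'
    have hB'qR : (((goodCol q S').filter fun σ => ∃ c' : Fin q, ∀ u ∈ f, σ u = c').card : ℝ)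
        * (q:ℝ) ^ f.card ≤ (q:ℝ) * ((goodCol q S').card : ℝ) := by
      exact_mod_cast hB'q
    have hNS'e : ((goodCol q S').card : ℝ) ≤ Real.exp 1 * ((goodCol q S).card : ℝ) := by
      calc ((goodCol q S').card : ℝ)
          = 1 * ((goodCol q S').card : ℝ) := (one_mul _).symm
        _ ≤ (Real.exp 1 * (1 - x) ^ Γ.card) * ((goodCol q S').card : ℝ) := by
            apply mul_le_mul_of_nonneg_right hexp (by positivity)
        _ = Real.exp 1 * ((1 - x) ^ Γ.card * ((goodCol q S').card : ℝ)) := by ring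
        _ ≤ Real.exp 1 * ((goodCol q S).card : ℝ) :=
            mul_le_mul_of_nonneg_left hchain (Real.exp_nonneg 1)
    have hP : (q:ℝ) * (Real.exp 1 * (t * Δ)) ≤ (q:ℝ) ^ f.card := by
      rw [hqpow]
      calc (q:ℝ) * (Real.exp 1 * (t * Δ)) = (q:ℝ) * (Real.exp 1 * t * Δ) := by ring
        _ ≤ (q:ℝ) * (q:ℝ) ^ (f.card - 1) := mul_le_mul_of_nonneg_left hqf (by positivity)
        _ = (q:ℝ) ^ (f.card - 1) * q := by ring
    rw [hxdef]
    exact lll_arith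
      (((goodCol q S).filter fun σ => ∃ c' : Fin q, ∀ u ∈ f, σ u = c').card : ℝ)
      (((goodCol q S').filter fun σ => ∃ c' : Fin q, ∀ u ∈ f, σ u = c').card : ℝ)
      ((goodCol q S).card : ℝ) ((goodCol q S').card : ℝ)
      ((goodCol q (insert f S)).card : ℝ)
      ((q:ℝ)) ((q:ℝ) ^ f.card) (t * Δ) (Real.exp 1)
      hqR0 (Real.exp_pos 1) htΔ (Nat.cast_nonneg _) (Nat.cast_nonneg _)
      hsplitR hBB'R hB'qR hP hNS'e

lemma block_bound (𝓔 : Finset (Finset V)) (q Δ k : ℕ) (t : ℝ)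
    (hΔ : 1 ≤ Δ) (hq0 : 0 < q)
    (h2 : ∀ e ∈ 𝓔, 2 ≤ e.card) (hk : ∀ e ∈ 𝓔, e.card ≤ k)
    (hdeg : ∀ u : V, (𝓔.filter fun e => u ∈ e).card ≤ Δ)
    (ht : (k : ℝ) ≤ t) (ht2 : 2 ≤ t)
    (hqe : ∀ e ∈ 𝓔, Real.exp 1 * t * (Δ : ℝ) ≤ (q : ℝ) ^ (e.card - 1))
    (e₀ : Finset V) (he₀ : e₀ ∈ 𝓔) (v : V) (hv : v ∈ e₀) (c : Fin q) :
    (((goodCol q 𝓔).filter fun σ => ∀ u ∈ e₀.erase v, σ u = c).card : ℝ) * (t * Δ)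
      ≤ ((goodCol q 𝓔).card : ℝ) := by
  have hne : ∀ e ∈ 𝓔, e.Nonempty := fun e he =>
    Finset.card_pos.mp (lt_of_lt_of_le (by norm_num) (h2 e he))
  have hΔR : (1:ℝ) ≤ (Δ:ℝ) := by exact_mod_cast hΔ
  have htΔ : (2:ℝ) ≤ t * Δ := by nlinarith
  have htΔ0 : (0:ℝ) < t * Δ := by linarith
  set x : ℝ := 1 / (t * Δ) with hxdef
  have hx0 : (0:ℝ) < x := by positivity
  have hx1 : x < 1 := by rw [hxdef, div_lt_one htΔ0]; linarith
  set b : Finset V := e₀.erase v with hbdef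
  have hbcard : b.card = e₀.card - 1 := Finset.card_erase_of_mem hv
  have hk2 : 2 ≤ k := le_trans (h2 e₀ he₀) (hk e₀ he₀)
  set S' : Finset (Finset V) := 𝓔.filter fun g => Disjoint b g with hS'
  set Γ : Finset (Finset V) := 𝓔.filter fun g => ¬ Disjoint b g with hΓ
  have hunion : S' ∪ Γ = 𝓔 := Finset.filter_union_filter_not_eq _ 𝓔
  have hΓcard : (Γ.card : ℝ) ≤ t * Δ - 1 := by
    have h1 : Γ.card ≤ b.card * Δ := neighbor_card 𝓔 Δ hdeg b
    have h2' : b.card ≤ k - 1 := by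
      rw [hbcard]
      exact Nat.sub_le_sub_right (hk e₀ he₀) 1
    have h3 : Γ.card ≤ (k - 1) * Δ := h1.trans (Nat.mul_le_mul_right _ h2')
    have h4 : ((k - 1 : ℕ) : ℝ) = (k : ℝ) - 1 := by
      have : 1 ≤ k := le_trans (by norm_num) hk2
      push_cast [this]; ring
    have h5 : (Γ.card : ℝ) ≤ ((k:ℝ) - 1) * Δ := by
      calc (Γ.card : ℝ) ≤ (((k - 1) * Δ : ℕ) : ℝ) := by exact_mod_cast h3
        _ = ((k:ℝ) - 1) * Δ := by push_cast [h4]; ring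
    nlinarith
  -- chain
  have chain : ∀ T ⊆ Γ, (1 - x) ^ T.card * ((goodCol q S').card : ℝ)
      ≤ ((goodCol q (S' ∪ T)).card : ℝ) := by
    intro T
    induction T using Finset.induction_on with
    | empty => intro _; simp
    | @insert g T hgT ihT =>
      intro hsub
      have hgΓ : g ∈ Γ := hsub (Finset.mem_insert_self g T)
      have hTΓ : T ⊆ Γ := fun y hy => hsub (Finset.mem_insert_of_mem hy)
      have hg𝓔 : g ∈ 𝓔 := (Finset.filter_subset _ _) hgΓ
      have hgS' : g ∉ S' := by
        simp only [hS', mem_filter]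
        simp only [hΓ, mem_filter] at hgΓ
        tauto
      have hgT' : g ∉ S' ∪ T := by
        simp only [Finset.mem_union]; tauto
      have hsub𝓔 : S' ∪ T ⊆ 𝓔 :=
        Finset.union_subset (Finset.filter_subset _ _)
          (hTΓ.trans (Finset.filter_subset _ _))
      have step := lll_main 𝓔 q Δ k t hΔ hq0 hne hk hdeg ht ht2 hqe
        (S' ∪ T) hsub𝓔 g hg𝓔 hgT'
      have hxx : (0:ℝ) ≤ 1 - x := by linarith
      calc (1 - x) ^ (insert g T).card * ((goodCol q S').card : ℝ)
          = (1 - x) * ((1 - x) ^ T.card * ((goodCol q S').card : ℝ)) := by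
            rw [Finset.card_insert_of_notMem hgT]; ring
        _ ≤ (1 - x) * ((goodCol q (S' ∪ T)).card : ℝ) :=
            mul_le_mul_of_nonneg_left (ihT hTΓ) hxx
        _ ≤ ((goodCol q (insert g (S' ∪ T))).card : ℝ) := step
        _ = ((goodCol q (S' ∪ insert g T)).card : ℝ) := by rw [Finset.union_insert]
  have hchain : (1 - x) ^ Γ.card * ((goodCol q S').card : ℝ)
      ≤ ((goodCol q 𝓔).card : ℝ) := by
    have := chain Γ (Finset.Subset.refl Γ)
    rwa [hunion] at this
  have hexp : 1 ≤ Real.exp 1 * (1 - x) ^ Γ.card := by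
    apply exp_mul_pow_ge x hx0 hx1
    calc (Γ.card : ℝ) * x ≤ (t * Δ - 1) * x :=
          mul_le_mul_of_nonneg_right hΓcard (le_of_lt hx0)
      _ = 1 - x := by rw [hxdef]; field_simp
  -- counting
  have hdisjS' : ∀ g ∈ S', Disjoint b g := by
    intro g hg; simp only [hS', mem_filter] at hg; exact hg.2
  have hcount := count_const_good q hq0 S' b hdisjS' c
  have hBB' : ((goodCol q 𝓔).filter fun σ => ∀ u ∈ b, σ u = c).card
      ≤ ((goodCol q S').filter fun σ => ∀ u ∈ b, σ u = c).card :=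
    Finset.card_le_card (Finset.filter_subset_filter _
      (goodCol_anti q (Finset.filter_subset _ 𝓔)))
  have hqb : Real.exp 1 * (t * Δ) ≤ (q:ℝ) ^ b.card := by
    have := hqe e₀ he₀
    rw [hbcard]
    calc Real.exp 1 * (t * Δ) = Real.exp 1 * t * Δ := by ring
      _ ≤ (q:ℝ) ^ (e₀.card - 1) := this
  -- assemble
  have hBB'R : (((goodCol q 𝓔).filter fun σ => ∀ u ∈ b, σ u = c).card : ℝ)
      ≤ (((goodCol q S').filter fun σ => ∀ u ∈ b, σ u = c).card : ℝ) := by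
    exact_mod_cast hBB'
  have hcountR : (((goodCol q S').filter fun σ => ∀ u ∈ b, σ u = c).card : ℝ)
      * (q:ℝ) ^ b.card = ((goodCol q S').card : ℝ) := by exact_mod_cast hcount
  have hNS'e : ((goodCol q S').card : ℝ) ≤ Real.exp 1 * ((goodCol q 𝓔).card : ℝ) := by
    calc ((goodCol q S').card : ℝ)
        = 1 * ((goodCol q S').card : ℝ) := (one_mul _).symm
      _ ≤ (Real.exp 1 * (1 - x) ^ Γ.card) * ((goodCol q S').card : ℝ) := by
          apply mul_le_mul_of_nonneg_right hexp (by positivity)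
      _ = Real.exp 1 * ((1 - x) ^ Γ.card * ((goodCol q S').card : ℝ)) := by ring
      _ ≤ Real.exp 1 * ((goodCol q 𝓔).card : ℝ) :=
          mul_le_mul_of_nonneg_left hchain (Real.exp_nonneg 1)
  have hB0 : (0:ℝ) ≤ (((goodCol q 𝓔).filter fun σ => ∀ u ∈ b, σ u = c).card : ℝ) :=
    Nat.cast_nonneg _
  have hP0 : (0:ℝ) < (q:ℝ) ^ b.card :=
    lt_of_lt_of_le (by positivity) hqb
  have key : Real.exp 1 * ((((goodCol q 𝓔).filter fun σ => ∀ u ∈ b, σ u = c).card : ℝ) * (t * Δ))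
      ≤ Real.exp 1 * ((goodCol q 𝓔).card : ℝ) := by
    have s1 : (((goodCol q 𝓔).filter fun σ => ∀ u ∈ b, σ u = c).card : ℝ)
        * (Real.exp 1 * (t * Δ))
        ≤ (((goodCol q 𝓔).filter fun σ => ∀ u ∈ b, σ u = c).card : ℝ) * (q:ℝ) ^ b.card :=
      mul_le_mul_of_nonneg_left hqb hB0
    have s2 : (((goodCol q 𝓔).filter fun σ => ∀ u ∈ b, σ u = c).card : ℝ) * (q:ℝ) ^ b.card
        ≤ (((goodCol q S').filter fun σ => ∀ u ∈ b, σ u = c).card : ℝ) * (q:ℝ) ^ b.card :=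
      mul_le_mul_of_nonneg_right hBB'R (le_of_lt hP0)
    calc Real.exp 1 * ((((goodCol q 𝓔).filter fun σ => ∀ u ∈ b, σ u = c).card : ℝ) * (t * Δ))
        = (((goodCol q 𝓔).filter fun σ => ∀ u ∈ b, σ u = c).card : ℝ)
            * (Real.exp 1 * (t * Δ)) := by ring
      _ ≤ (((goodCol q S').filter fun σ => ∀ u ∈ b, σ u = c).card : ℝ) * (q:ℝ) ^ b.card :=
          le_trans s1 s2
      _ = ((goodCol q S').card : ℝ) := hcountR
      _ ≤ Real.exp 1 * ((goodCol q 𝓔).card : ℝ) := hNS'e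
  exact le_of_mul_le_mul_left key (Real.exp_pos 1)

lemma bad_bound (𝓔 : Finset (Finset V)) (q Δ k : ℕ) (t : ℝ)
    (hΔ : 1 ≤ Δ) (hq0 : 0 < q)
    (h2 : ∀ e ∈ 𝓔, 2 ≤ e.card) (hk : ∀ e ∈ 𝓔, e.card ≤ k)
    (hdeg : ∀ u : V, (𝓔.filter fun e => u ∈ e).card ≤ Δ)
    (ht : (k : ℝ) ≤ t) (ht2 : 2 ≤ t)
    (hqe : ∀ e ∈ 𝓔, Real.exp 1 * t * (Δ : ℝ) ≤ (q : ℝ) ^ (e.card - 1))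
    (v : V) (c : Fin q) :
    (((goodCol q 𝓔).filter fun σ =>
        ∃ e ∈ 𝓔, v ∈ e ∧ ∀ u ∈ e.erase v, σ u = c).card : ℝ) * t
      ≤ ((goodCol q 𝓔).card : ℝ) := by
  have hΔR : (1:ℝ) ≤ (Δ:ℝ) := by exact_mod_cast hΔ
  have hsub : ((goodCol q 𝓔).filter fun σ => ∃ e ∈ 𝓔, v ∈ e ∧ ∀ u ∈ e.erase v, σ u = c)
      ⊆ (𝓔.filter fun e => v ∈ e).biUnion fun e =>
        (goodCol q 𝓔).filter fun σ => ∀ u ∈ e.erase v, σ u = c := by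
    intro σ hσ
    simp only [mem_filter, mem_biUnion] at hσ ⊢
    obtain ⟨h1, e, he, hve, hcc⟩ := hσ
    exact ⟨e, ⟨he, hve⟩, h1, hcc⟩
  have hcard : ((goodCol q 𝓔).filter fun σ =>
      ∃ e ∈ 𝓔, v ∈ e ∧ ∀ u ∈ e.erase v, σ u = c).card
      ≤ ∑ e ∈ 𝓔.filter fun e => v ∈ e,
        ((goodCol q 𝓔).filter fun σ => ∀ u ∈ e.erase v, σ u = c).card :=
    (Finset.card_le_card hsub).trans Finset.card_biUnion_le
  have hcardR : (((goodCol q 𝓔).filter fun σ =>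
      ∃ e ∈ 𝓔, v ∈ e ∧ ∀ u ∈ e.erase v, σ u = c).card : ℝ)
      ≤ ∑ e ∈ 𝓔.filter fun e => v ∈ e,
        (((goodCol q 𝓔).filter fun σ => ∀ u ∈ e.erase v, σ u = c).card : ℝ) := by
    exact_mod_cast hcard
  have hterm : ∀ e ∈ 𝓔.filter fun e => v ∈ e,
      (((goodCol q 𝓔).filter fun σ => ∀ u ∈ e.erase v, σ u = c).card : ℝ) * (t * Δ)
        ≤ ((goodCol q 𝓔).card : ℝ) := by
    intro e he
    simp only [mem_filter] at he
    exact block_bound 𝓔 q Δ k t hΔ hq0 h2 hk hdeg ht ht2 hqe e he.1 v he.2 c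
  have hsum : (∑ e ∈ 𝓔.filter fun e => v ∈ e,
      (((goodCol q 𝓔).filter fun σ => ∀ u ∈ e.erase v, σ u = c).card : ℝ)) * (t * Δ)
      ≤ (Δ : ℝ) * ((goodCol q 𝓔).card : ℝ) := by
    rw [Finset.sum_mul]
    calc ∑ e ∈ 𝓔.filter fun e => v ∈ e,
          (((goodCol q 𝓔).filter fun σ => ∀ u ∈ e.erase v, σ u = c).card : ℝ) * (t * Δ)
        ≤ ∑ _e ∈ 𝓔.filter fun e => v ∈ e, ((goodCol q 𝓔).card : ℝ) :=
          Finset.sum_le_sum hterm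
      _ = ((𝓔.filter fun e => v ∈ e).card : ℝ) * ((goodCol q 𝓔).card : ℝ) := by
          rw [Finset.sum_const, nsmul_eq_mul]
      _ ≤ (Δ : ℝ) * ((goodCol q 𝓔).card : ℝ) := by
          apply mul_le_mul_of_nonneg_right _ (Nat.cast_nonneg _)
          exact_mod_cast hdeg v
  have htpos : (0:ℝ) < t := by linarith
  have hmul : (Δ:ℝ) * ((((goodCol q 𝓔).filter fun σ =>
      ∃ e ∈ 𝓔, v ∈ e ∧ ∀ u ∈ e.erase v, σ u = c).card : ℝ) * t)
      ≤ (Δ:ℝ) * ((goodCol q 𝓔).card : ℝ) := by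
    calc (Δ:ℝ) * ((((goodCol q 𝓔).filter fun σ =>
          ∃ e ∈ 𝓔, v ∈ e ∧ ∀ u ∈ e.erase v, σ u = c).card : ℝ) * t)
        = (((goodCol q 𝓔).filter fun σ =>
            ∃ e ∈ 𝓔, v ∈ e ∧ ∀ u ∈ e.erase v, σ u = c).card : ℝ) * (t * Δ) := by ring
      _ ≤ (∑ e ∈ 𝓔.filter fun e => v ∈ e,
            (((goodCol q 𝓔).filter fun σ => ∀ u ∈ e.erase v, σ u = c).card : ℝ)) * (t * Δ) := by
          apply mul_le_mul_of_nonneg_right hcardR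
          nlinarith
      _ ≤ (Δ : ℝ) * ((goodCol q 𝓔).card : ℝ) := hsum
  exact le_of_mul_le_mul_left hmul (by linarith)

lemma recolour (𝓔 : Finset (Finset V)) (q : ℕ) (v : V) (c : Fin q) :
    (goodCol q 𝓔).card
      ≤ ((goodCol q 𝓔).filter fun σ => ∃ e ∈ 𝓔, v ∈ e ∧ ∀ u ∈ e.erase v, σ u = c).card
        + q * ((goodCol q 𝓔).filter fun σ => σ v = c).card := by
  have hsplit : ((goodCol q 𝓔).filter fun σ => ∃ e ∈ 𝓔, v ∈ e ∧ ∀ u ∈ e.erase v, σ u = c).card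
      + ((goodCol q 𝓔).filter fun σ => ¬ ∃ e ∈ 𝓔, v ∈ e ∧ ∀ u ∈ e.erase v, σ u = c).card
      = (goodCol q 𝓔).card := Finset.card_filter_add_card_filter_not _
  set G := (goodCol q 𝓔).filter fun σ => ¬ ∃ e ∈ 𝓔, v ∈ e ∧ ∀ u ∈ e.erase v, σ u = c with hG
  have hmaps : ∀ σ ∈ G, Function.update σ v c ∈ (goodCol q 𝓔).filter fun σ => σ v = c := by
    intro σ hσ
    simp only [hG, mem_filter, goodCol, mem_univ, true_and] at hσ ⊢
    obtain ⟨hgood, hnbad⟩ := hσ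
    refine ⟨?_, Function.update_self v c σ⟩
    intro e he hex
    obtain ⟨c₂, hc₂⟩ := hex
    by_cases hve : v ∈ e
    · apply hnbad
      refine ⟨e, he, hve, ?_⟩
      intro u hu
      have hune : u ≠ v := Finset.ne_of_mem_erase hu
      have h1 : σ u = c₂ := by
        rw [← hc₂ u (Finset.mem_of_mem_erase hu), Function.update_of_ne hune]
      have h2 : c₂ = c := by
        rw [← hc₂ v hve, Function.update_self]
      rw [h1, h2]
    · apply hgood e he
      refine ⟨c₂, fun u hu => ?_⟩
      have hune : u ≠ v := fun h => hve (h ▸ hu)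
      rw [← hc₂ u hu, Function.update_of_ne hune]
  have hfiber : ∀ a ∈ G.image fun σ => Function.update σ v c,
      (G.filter fun σ => Function.update σ v c = a).card ≤ q := by
    intro a _
    have hinj : Set.InjOn (fun σ : V → Fin q => σ v)
        ↑(G.filter fun σ => Function.update σ v c = a) := by
      intro σ₁ h₁ σ₂ h₂ hvv
      simp only [Finset.coe_filter, Set.mem_setOf_eq] at h₁ h₂
      funext u
      by_cases huv : u = v
      · rw [huv]; exact hvv
      · have := congrFun (h₁.2.trans h₂.2.symm) u
        rwa [Function.update_of_ne huv, Function.update_of_ne huv] at this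
    calc (G.filter fun σ => Function.update σ v c = a).card
        ≤ (univ : Finset (Fin q)).card :=
          Finset.card_le_card_of_injOn _ (fun _ _ => mem_univ _) hinj
      _ = q := by simp
  have hG_le : G.card ≤ q * ((goodCol q 𝓔).filter fun σ => σ v = c).card := by
    calc G.card ≤ q * (G.image fun σ => Function.update σ v c).card :=
          Finset.card_le_mul_card_image _ q hfiber
      _ ≤ q * ((goodCol q 𝓔).filter fun σ => σ v = c).card := by
          apply Nat.mul_le_mul_left
          apply Finset.card_le_card
          intro a ha
          obtain ⟨σ, hσ, rfl⟩ := Finset.mem_image.mp ha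
          exact hmaps σ hσ
  calc (goodCol q 𝓔).card
      = ((goodCol q 𝓔).filter fun σ => ∃ e ∈ 𝓔, v ∈ e ∧ ∀ u ∈ e.erase v, σ u = c).card
        + G.card := hsplit.symm
    _ ≤ ((goodCol q 𝓔).filter fun σ => ∃ e ∈ 𝓔, v ∈ e ∧ ∀ u ∈ e.erase v, σ u = c).card
        + q * ((goodCol q 𝓔).filter fun σ => σ v = c).card := Nat.add_le_add_left hG_le _


end Helpers

/-- Marginal lower bound in the local lemma regime.  Let `H = (V,𝓔)` be a
hypergraph of maximum degree `Δ` whose hyperedges all have size between `k'` and `k`.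
If `t ≥ k` and `q ≥ (etΔ)^{1/(k'−1)}`, then for every vertex `v` and colour `c`, the
probability under the uniform distribution over proper `q`-colourings that `v` gets
colour `c` is at least `(1/q)(1 − 1/t)`. -/
theorem marginal_lower_bound
    {V : Type*} [Fintype V] [DecidableEq V] (𝓔 : Finset (Finset V))
    (q k k' Δ : ℕ) (t : ℝ) (hk' : 2 ≤ k')
    (hsize : ∀ e ∈ 𝓔, k' ≤ e.card ∧ e.card ≤ k)
    (hdeg : ∀ v : V, (𝓔.filter (fun e => v ∈ e)).card ≤ Δ)
    (ht : (k : ℝ) ≤ t)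
    (hq : (Real.exp 1 * t * (Δ : ℝ)) ^ ((1 : ℝ) / ((k' : ℝ) - 1)) ≤ (q : ℝ))
    (hne : {σ : V → Fin q | ∀ e ∈ 𝓔, ¬ ∃ c', ∀ u ∈ e, σ u = c'}.Nonempty)
    (v : V) (c : Fin q) :
    (1 / (q : ℝ)) * (1 - 1 / t)
        * ({σ : V → Fin q | ∀ e ∈ 𝓔, ¬ ∃ c', ∀ u ∈ e, σ u = c'}.ncard : ℝ)
      ≤ ({σ : V → Fin q | (∀ e ∈ 𝓔, ¬ ∃ c', ∀ u ∈ e, σ u = c') ∧ σ v = c}.ncard : ℝ) := by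
  classical
  have hq0 : 0 < q := c.pos
  have hq0R : (0:ℝ) < q := by exact_mod_cast hq0
  -- translate ncard to Finset cards
  have hs1 : {σ : V → Fin q | ∀ e ∈ 𝓔, ¬ ∃ c', ∀ u ∈ e, σ u = c'}
      = ↑(goodCol q 𝓔) := by
    ext σ; simp [goodCol]
  have hs2 : {σ : V → Fin q | (∀ e ∈ 𝓔, ¬ ∃ c', ∀ u ∈ e, σ u = c') ∧ σ v = c}
      = ↑((goodCol q 𝓔).filter fun σ => σ v = c) := by
    ext σ; simp [goodCol]
  rw [hs1, hs2, Set.ncard_coe_finset, Set.ncard_coe_finset]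
  have hrec := recolour 𝓔 q v c
  have hrecR : ((goodCol q 𝓔).card : ℝ)
      ≤ (((goodCol q 𝓔).filter fun σ => ∃ e ∈ 𝓔, v ∈ e ∧ ∀ u ∈ e.erase v, σ u = c).card : ℝ)
        + (q:ℝ) * (((goodCol q 𝓔).filter fun σ => σ v = c).card : ℝ) := by
    exact_mod_cast hrec
  have hN0 : (0:ℝ) ≤ ((goodCol q 𝓔).card : ℝ) := Nat.cast_nonneg _
  have hΩc0 : (0:ℝ) ≤ (((goodCol q 𝓔).filter fun σ => σ v = c).card : ℝ) := Nat.cast_nonneg _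
  have ht0' : (0:ℝ) ≤ t := le_trans (Nat.cast_nonneg k) ht
  by_cases hE : ∃ e ∈ 𝓔, v ∈ e
  · -- nontrivial case
    obtain ⟨e₀, he₀, hve₀⟩ := hE
    have hΔ : 1 ≤ Δ := by
      have h1 : 0 < (𝓔.filter fun e => v ∈ e).card :=
        Finset.card_pos.mpr ⟨e₀, Finset.mem_filter.mpr ⟨he₀, hve₀⟩⟩
      exact h1.trans_le (hdeg v)
    have hΔR : (1:ℝ) ≤ (Δ:ℝ) := by exact_mod_cast hΔ
    have h2 : ∀ e ∈ 𝓔, 2 ≤ e.card := fun e he => le_trans hk' (hsize e he).1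
    have hk2 : 2 ≤ k := le_trans (h2 e₀ he₀) (hsize e₀ he₀).2
    have ht2 : (2:ℝ) ≤ t := le_trans (by exact_mod_cast hk2) ht
    have ht0 : (0:ℝ) < t := by linarith
    -- q^{k'-1} ≥ e t Δ
    have hA0 : (0:ℝ) ≤ Real.exp 1 * t * Δ := by positivity
    have hk'1 : (0:ℝ) < (k':ℝ) - 1 := by
      have : (2:ℝ) ≤ (k':ℝ) := by exact_mod_cast hk'
      linarith
    have hbase : Real.exp 1 * t * (Δ:ℝ) ≤ (q:ℝ) ^ (k' - 1) := by
      have hpow := Real.rpow_le_rpow (Real.rpow_nonneg hA0 _) hq (le_of_lt hk'1)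
      rw [← Real.rpow_natCast ((q:ℝ)) (k' - 1)]
      have hcast : (((k' - 1 : ℕ)) : ℝ) = (k':ℝ) - 1 := by
        have : 1 ≤ k' := le_trans (by norm_num) hk' 
        push_cast [this]; ring
      rw [hcast]
      calc Real.exp 1 * t * (Δ:ℝ)
          = (Real.exp 1 * t * (Δ:ℝ)) ^ ((1:ℝ)) := by rw [Real.rpow_one]
        _ = ((Real.exp 1 * t * (Δ:ℝ)) ^ ((1:ℝ)/((k':ℝ)-1))) ^ ((k':ℝ)-1) := by
            rw [← Real.rpow_mul hA0]
            congr 1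
            field_simp
        _ ≤ (q:ℝ) ^ ((k':ℝ)-1) := hpow
    have hq1R : (1:ℝ) ≤ (q:ℝ) := by exact_mod_cast hq0
    have hqe : ∀ e ∈ 𝓔, Real.exp 1 * t * (Δ:ℝ) ≤ (q:ℝ) ^ (e.card - 1) := by
      intro e he
      refine le_trans hbase (pow_le_pow_right₀ hq1R ?_)
      exact Nat.sub_le_sub_right (hsize e he).1 1
    have hbad := bad_bound 𝓔 q Δ k t hΔ hq0 h2 (fun e he => (hsize e he).2)
      hdeg ht ht2 hqe v c
    have hgoal : (1/(q:ℝ)) * (1 - 1/t) * ((goodCol q 𝓔).card : ℝ)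
        = ((t - 1) * ((goodCol q 𝓔).card : ℝ)) / ((q:ℝ) * t) := by
      field_simp
    rw [hgoal, div_le_iff₀ (by positivity)]
    nlinarith [mul_le_mul_of_nonneg_right hrecR (le_of_lt ht0), hbad, hΩc0,
      mul_nonneg hΩc0 (le_of_lt ht0)]
  · -- no edge contains v
    have hbadempty : ((goodCol q 𝓔).filter fun σ =>
        ∃ e ∈ 𝓔, v ∈ e ∧ ∀ u ∈ e.erase v, σ u = c) = ∅ := by
      apply Finset.filter_false_of_mem
      intro σ _
      rintro ⟨e, he, hve, -⟩
      exact hE ⟨e, he, hve⟩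
    rw [hbadempty] at hrecR
    simp only [Finset.card_empty, Nat.cast_zero, zero_add] at hrecR
    have h1t : 1 - 1/t ≤ 1 := by
      have : (0:ℝ) ≤ 1/t := by positivity
      linarith
    have h1t0 : 0 ≤ 1 - 1/t ∨ 1 - 1/t < 0 := le_or_gt 0 _
    rcases h1t0 with h | h
    · calc (1/(q:ℝ)) * (1 - 1/t) * ((goodCol q 𝓔).card : ℝ)
          ≤ (1/(q:ℝ)) * 1 * ((goodCol q 𝓔).card : ℝ) := by
            apply mul_le_mul_of_nonneg_right _ hN0
            apply mul_le_mul_of_nonneg_left h1t (by positivity)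
        _ ≤ (((goodCol q 𝓔).filter fun σ => σ v = c).card : ℝ) := by
            rw [mul_one, one_div, inv_mul_le_iff₀ hq0R]
            linarith
    · have : (1/(q:ℝ)) * (1 - 1/t) * ((goodCol q 𝓔).card : ℝ) ≤ 0 := by
        apply mul_nonpos_of_nonpos_of_nonneg _ hN0
        apply mul_nonpos_of_nonneg_of_nonpos (by positivity) (le_of_lt h)
      linarith
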